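/- Generalized performance difference lemma: For a discounted MDP with discount γ ∈ [0,1), bounded reward r, any two policies π, π', any bounded function f : S×A → R, and any initial state distribution μ, we have V^π_μ − E_{s∼μ}[f(s,π')] = (1/(1−γ)) E_{(s,a)∼d^π_μ}[T^{π'}f(s,a) − f(s,π')], where T^{π'}f(s,a) = r(s,a) + γ E_{s'∼P(s,a)}[f(s',π')], f(s,π') = E_{a∼π'(s)}[f(s,a)], V^π_μ is the expected discounted return of π from μ, and d^π_μ(s,a) = (1−γ)∑_{h≥0} γ^h d^π_h(s,a) is the discounted occupancy measure. -/

import Mathlib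

open Finset

/-- weighted average bound, one index -/
lemma wavg_abs_le {ι : Type*} [Fintype ι] (w g : ι → ℝ)
    (hw : ∀ i, 0 ≤ w i) (hw1 : ∑ i, w i = 1) (D : ℝ) (hg : ∀ i, |g i| ≤ D) :
    |∑ i, w i * g i| ≤ D := by
  calc |∑ i, w i * g i| ≤ ∑ i, |w i * g i| := Finset.abs_sum_le_sum_abs _ _
    _ ≤ ∑ i, w i * D := Finset.sum_le_sum fun i _ => by
        rw [abs_mul, abs_of_nonneg (hw i)]
        exact mul_le_mul_of_nonneg_left (hg i) (hw i)
    _ = D := by rw [← Finset.sum_mul, hw1, one_mul]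

/-- weighted average bound, two indices -/
lemma wavg_abs_le2 {ι κ : Type*} [Fintype ι] [Fintype κ] (w g : ι → κ → ℝ)
    (hw : ∀ i j, 0 ≤ w i j) (hw1 : ∑ i, ∑ j, w i j = 1) (D : ℝ)
    (hg : ∀ i j, |g i j| ≤ D) :
    |∑ i, ∑ j, w i j * g i j| ≤ D := by
  calc |∑ i, ∑ j, w i j * g i j| ≤ ∑ i, ∑ j, |w i j * g i j| := by
        refine (Finset.abs_sum_le_sum_abs _ _).trans (Finset.sum_le_sum fun i _ => ?_)
        exact Finset.abs_sum_le_sum_abs _ _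
    _ ≤ ∑ i, ∑ j, w i j * D := by
        refine Finset.sum_le_sum fun i _ => Finset.sum_le_sum fun j _ => ?_
        rw [abs_mul, abs_of_nonneg (hw i j)]
        exact mul_le_mul_of_nonneg_left (hg i j) (hw i j)
    _ = D := by
        simp_rw [← Finset.sum_mul]
        rw [hw1, one_mul]

set_option maxHeartbeats 1000000 in
theorem generalized_performance_difference
    (S A : Type) [Fintype S] [Fintype A]
    (P : S → A → S → ℝ) (r : S → A → ℝ) (γ : ℝ)
    (π π' : S → A → ℝ) (μ : S → ℝ) (f : S → A → ℝ)
    (hγ0 : 0 ≤ γ) (hγ1 : γ < 1)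
    (hP0 : ∀ s a s', 0 ≤ P s a s') (hP1 : ∀ s a, ∑ s', P s a s' = 1)
    (hr : ∀ s a, |r s a| ≤ 1)
    (hπ0 : ∀ s a, 0 ≤ π s a) (hπ1 : ∀ s, ∑ a, π s a = 1)
    (hπ'0 : ∀ s a, 0 ≤ π' s a) (hπ'1 : ∀ s, ∑ a, π' s a = 1)
    (hμ0 : ∀ s, 0 ≤ μ s) (hμ1 : ∑ s, μ s = 1)
    (hfbdd : ∃ C : ℝ, ∀ s a, |f s a| ≤ C)
    -- step-h state-action distribution of π starting from μ
    (dh : ℕ → S → A → ℝ)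
    (hdh0 : ∀ s a, dh 0 s a = μ s * π s a)
    (hdhsucc : ∀ h s a,
      dh (h + 1) s a = (∑ s', ∑ a', dh h s' a' * P s' a' s) * π s a)
    -- expected discounted return of π from μ
    (V : ℝ) (hV : V = ∑' h : ℕ, γ ^ h * ∑ s, ∑ a, dh h s a * r s a)
    -- discounted state-action occupancy measure
    (docc : S → A → ℝ)
    (hdocc : ∀ s a, docc s a = (1 - γ) * ∑' h : ℕ, γ ^ h * dh h s a)
    -- Bellman operator of π' applied to f
    (Tf : S → A → ℝ)
    (hT : ∀ s a, Tf s a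
      = r s a + γ * ∑ s', P s a s' * ∑ a', π' s' a' * f s' a')
    -- f(s, π')
    (fπ' : S → ℝ) (hfπ' : ∀ s, fπ' s = ∑ a, π' s a * f s a) :
    V - ∑ s, μ s * fπ' s
      = (1 / (1 - γ)) * ∑ s, ∑ a, docc s a * (Tf s a - fπ' s) := by
  obtain ⟨C₀, hC₀⟩ := hfbdd
  set C : ℝ := max C₀ 0 with hCdef
  have hC0 : (0:ℝ) ≤ C := le_max_right _ _
  have hC : ∀ s a, |f s a| ≤ C := fun s a => (hC₀ s a).trans (le_max_left _ _)
  have hγne : (1:ℝ) - γ ≠ 0 := by linarith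
  -- Tf in terms of fπ'
  have hT' : ∀ s a, Tf s a = r s a + γ * ∑ s', P s a s' * fπ' s' := by
    intro s a; rw [hT]; simp_rw [hfπ']
  -- basic properties of dh
  have hdnn : ∀ h s a, 0 ≤ dh h s a := by
    intro h
    induction h with
    | zero => intro s a; rw [hdh0]; exact mul_nonneg (hμ0 s) (hπ0 s a)
    | succ h ih =>
      intro s a; rw [hdhsucc]
      refine mul_nonneg (Finset.sum_nonneg fun s' _ => Finset.sum_nonneg fun a' _ => ?_)
        (hπ0 s a)
      exact mul_nonneg (ih s' a') (hP0 s' a' s)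
  have hdsum : ∀ h, ∑ s, ∑ a, dh h s a = 1 := by
    intro h
    induction h with
    | zero => simp_rw [hdh0, ← Finset.mul_sum, hπ1, mul_one, hμ1]
    | succ h ih =>
      simp_rw [hdhsucc, ← Finset.mul_sum, hπ1, mul_one]
      calc ∑ s, ∑ s', ∑ a', dh h s' a' * P s' a' s
          = ∑ s', ∑ a', ∑ s, dh h s' a' * P s' a' s := by
            rw [Finset.sum_comm]
            exact Finset.sum_congr rfl fun s' _ => Finset.sum_comm
        _ = ∑ s', ∑ a', dh h s' a' * ∑ s, P s' a' s := by
            simp_rw [Finset.mul_sum]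
        _ = 1 := by simp_rw [hP1, mul_one, ih]
  -- bounds
  have hfb : ∀ s, |fπ' s| ≤ C := by
    intro s; rw [hfπ']
    exact wavg_abs_le (π' s) (f s) (hπ'0 s) (hπ'1 s) C (hC s)
  have hTfb : ∀ s a, |Tf s a - fπ' s| ≤ 1 + 2 * C := by
    intro s a
    have h1 : |∑ s', P s a s' * fπ' s'| ≤ C :=
      wavg_abs_le (P s a) fπ' (hP0 s a) (hP1 s a) C hfb
    have h2 : |Tf s a| ≤ 1 + C := by
      rw [hT']
      calc |r s a + γ * ∑ s', P s a s' * fπ' s'|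
          ≤ |r s a| + |γ * ∑ s', P s a s' * fπ' s'| := abs_add_le _ _
        _ ≤ 1 + C := by
            rw [abs_mul, abs_of_nonneg hγ0]
            have : γ * |∑ s', P s a s' * fπ' s'| ≤ 1 * C := by
              apply mul_le_mul (le_of_lt hγ1) h1 (abs_nonneg _) zero_le_one
            linarith [hr s a]
    calc |Tf s a - fπ' s| ≤ |Tf s a| + |fπ' s| := abs_sub _ _
      _ ≤ 1 + 2 * C := by linarith [hfb s]
  -- abbreviations
  set Rh : ℕ → ℝ := fun h => ∑ s, ∑ a, dh h s a * r s a with hRh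
  set Gh : ℕ → ℝ := fun h => ∑ s, ∑ a, dh h s a * fπ' s with hGh
  set Qh : ℕ → ℝ := fun h => ∑ s, ∑ a, dh h s a * (Tf s a - fπ' s) with hQh
  have hRb : ∀ h, |Rh h| ≤ 1 := fun h =>
    wavg_abs_le2 (dh h) r (hdnn h) (hdsum h) 1 hr
  have hGb : ∀ h, |Gh h| ≤ C := fun h =>
    wavg_abs_le2 (dh h) (fun s _ => fπ' s) (hdnn h) (hdsum h) C (fun s _ => hfb s)
  have hQb : ∀ h, |Qh h| ≤ 1 + 2 * C := fun h =>
    wavg_abs_le2 (dh h) (fun s a => Tf s a - fπ' s) (hdnn h) (hdsum h) _ hTfb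
  -- summability helper
  have hsummable : ∀ (x : ℕ → ℝ) (D : ℝ), (∀ n, |x n| ≤ D) →
      Summable (fun n => γ ^ n * x n) := by
    intro x D hx
    apply Summable.of_norm_bounded
      ((summable_geometric_of_lt_one hγ0 hγ1).mul_left D)
    intro n
    rw [Real.norm_eq_abs, abs_mul, abs_pow, abs_of_nonneg hγ0, mul_comm]
    exact mul_le_mul_of_nonneg_right (hx n) (pow_nonneg hγ0 n)
  have hsumR : Summable (fun h => γ ^ h * Rh h) := hsummable _ 1 hRb
  have hsumG : Summable (fun h => γ ^ h * Gh h) := hsummable _ C hGb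
  have hsumQ : Summable (fun h => γ ^ h * Qh h) := hsummable _ (1 + 2 * C) hQb
  have hsumG' : Summable (fun h => γ ^ (h + 1) * Gh (h + 1)) :=
    (summable_nat_add_iff 1).2 hsumG
  -- key recursion: Qh h = Rh h + γ * Gh (h+1) - Gh h
  have hnext : ∀ h, Gh (h + 1) = ∑ s, ∑ a, dh h s a * ∑ s', P s a s' * fπ' s' := by
    intro h
    calc Gh (h + 1)
        = ∑ s, (∑ s', ∑ a', dh h s' a' * P s' a' s) * fπ' s := by
          simp only [hGh]
          refine Finset.sum_congr rfl fun s _ => ?_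
          calc ∑ a, dh (h + 1) s a * fπ' s
              = ∑ a, ((∑ s', ∑ a', dh h s' a' * P s' a' s) * fπ' s) * π s a :=
                Finset.sum_congr rfl fun a _ => by rw [hdhsucc]; ring
            _ = ((∑ s', ∑ a', dh h s' a' * P s' a' s) * fπ' s) * ∑ a, π s a :=
                (Finset.mul_sum _ _ _).symm
            _ = (∑ s', ∑ a', dh h s' a' * P s' a' s) * fπ' s := by
                rw [hπ1, mul_one]
      _ = ∑ s', ∑ a', dh h s' a' * ∑ s, P s' a' s * fπ' s := by
          simp_rw [Finset.sum_mul, Finset.mul_sum, ← mul_assoc]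
          rw [Finset.sum_comm]
          exact Finset.sum_congr rfl fun s' _ => Finset.sum_comm
  have hQrec : ∀ h, Qh h = Rh h + γ * Gh (h + 1) - Gh h := by
    intro h
    rw [hnext h]
    simp only [hQh, hRh, hGh]
    have e : ∀ s a, dh h s a * (Tf s a - fπ' s)
        = dh h s a * r s a + γ * (dh h s a * ∑ s', P s a s' * fπ' s')
          - dh h s a * fπ' s := by
      intro s a; rw [hT']; ring
    calc ∑ s, ∑ a, dh h s a * (Tf s a - fπ' s)
        = ∑ s, ∑ a, (dh h s a * r s a
            + γ * (dh h s a * ∑ s', P s a s' * fπ' s') - dh h s a * fπ' s) :=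
          Finset.sum_congr rfl fun s _ => Finset.sum_congr rfl fun a _ => e s a
      _ = (∑ s, ∑ a, dh h s a * r s a)
          + (∑ s, ∑ a, γ * (dh h s a * ∑ s', P s a s' * fπ' s'))
          - ∑ s, ∑ a, dh h s a * fπ' s := by
          simp [Finset.sum_add_distrib, Finset.sum_sub_distrib]
      _ = (∑ s, ∑ a, dh h s a * r s a)
          + γ * (∑ s, ∑ a, dh h s a * ∑ s', P s a s' * fπ' s')
          - ∑ s, ∑ a, dh h s a * fπ' s := by
          simp [Finset.mul_sum]
  -- telescoping
  have htel : ∑' h, γ ^ h * Qh h = (∑' h, γ ^ h * Rh h) - Gh 0 := by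
    have e : ∀ h, γ ^ h * Qh h
        = γ ^ h * Rh h + (γ ^ (h + 1) * Gh (h + 1) - γ ^ h * Gh h) := by
      intro h; rw [hQrec h]; ring
    have h0 := Summable.tsum_eq_zero_add hsumG
    calc ∑' h, γ ^ h * Qh h
        = ∑' h, (γ ^ h * Rh h + (γ ^ (h + 1) * Gh (h + 1) - γ ^ h * Gh h)) :=
          tsum_congr e
      _ = (∑' h, γ ^ h * Rh h)
          + ∑' h, (γ ^ (h + 1) * Gh (h + 1) - γ ^ h * Gh h) :=
          Summable.tsum_add hsumR (hsumG'.sub hsumG)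
      _ = (∑' h, γ ^ h * Rh h)
          + ((∑' h, γ ^ (h + 1) * Gh (h + 1)) - ∑' h, γ ^ h * Gh h) := by
          rw [Summable.tsum_sub hsumG' hsumG]
      _ = (∑' h, γ ^ h * Rh h) - Gh 0 := by
          rw [h0]; simp only [pow_zero, one_mul]; ring
  -- Gh 0
  have hG0 : Gh 0 = ∑ s, μ s * fπ' s := by
    simp only [hGh]
    refine Finset.sum_congr rfl fun s _ => ?_
    calc ∑ a, dh 0 s a * fπ' s
        = ∑ a, (μ s * fπ' s) * π s a :=
          Finset.sum_congr rfl fun a _ => by rw [hdh0]; ring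
      _ = (μ s * fπ' s) * ∑ a, π s a := (Finset.mul_sum _ _ _).symm
      _ = μ s * fπ' s := by rw [hπ1, mul_one]
  -- occupancy side
  have hdb : ∀ h s a, |dh h s a| ≤ 1 := by
    intro h s a
    rw [abs_of_nonneg (hdnn h s a)]
    calc dh h s a ≤ ∑ a', dh h s a' :=
          Finset.single_le_sum (fun a' _ => hdnn h s a') (Finset.mem_univ a)
      _ ≤ ∑ s', ∑ a', dh h s' a' :=
          Finset.single_le_sum
            (fun s' _ => Finset.sum_nonneg fun a' _ => hdnn h s' a')
            (Finset.mem_univ s)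
      _ = 1 := hdsum h
  have hin : ∀ s a, Summable (fun h => γ ^ h * (dh h s a * (Tf s a - fπ' s))) := by
    intro s a
    apply hsummable _ (1 + 2 * C)
    intro h
    rw [abs_mul]
    calc |dh h s a| * |Tf s a - fπ' s| ≤ 1 * (1 + 2 * C) :=
        mul_le_mul (hdb h s a) (hTfb s a) (abs_nonneg _) zero_le_one
      _ = 1 + 2 * C := one_mul _
  have hocc : ∑ s, ∑ a, docc s a * (Tf s a - fπ' s)
      = (1 - γ) * ∑' h, γ ^ h * Qh h := by
    have step1 : ∀ s a, docc s a * (Tf s a - fπ' s)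
        = (1 - γ) * ∑' h, γ ^ h * (dh h s a * (Tf s a - fπ' s)) := by
      intro s a
      rw [hdocc, mul_assoc, ← tsum_mul_right]
      simp_rw [mul_assoc]
    simp_rw [step1, ← Finset.mul_sum]
    congr 1
    have inner : ∀ s, ∑ a, ∑' h, γ ^ h * (dh h s a * (Tf s a - fπ' s))
        = ∑' h, ∑ a, γ ^ h * (dh h s a * (Tf s a - fπ' s)) := by
      intro s
      exact (Summable.tsum_finsetSum fun a _ => hin s a).symm
    simp_rw [inner]
    rw [← Summable.tsum_finsetSum]
    · apply tsum_congr
      intro h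
      simp only [hQh]
      simp_rw [Finset.mul_sum]
    · intro s _
      exact summable_sum fun a _ => hin s a
  -- conclude
  rw [hocc, hV, ← hG0]
  have hVR : (∑' h : ℕ, γ ^ h * ∑ s, ∑ a, dh h s a * r s a)
      = ∑' h, γ ^ h * Rh h := by rw [hRh]
  rw [hVR, ← htel, one_div, inv_mul_cancel_left₀ hγne]
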